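/- Let n ∈ ω and let μ be a cardinal with μ ≥ ℵ_{n+1}. If a product X = ∏_{j∈J} X_j of nonempty topological spaces satisfies R(ℵ_{n+1},μ;<ℵ_{n+1}) (i.e., every ℵ_{n+1}-indexed sequence of open covers of cardinality ≤ μ admits subfamilies of cardinality ≤ ℵ_n whose union is a cover), then the set {j ∈ J : X_j is not initially μ-compact} has cardinality at most ℵ_n. -/

import Mathlib

open Cardinal Set Filter

universe u

/-- `X` satisfies `R(λ,μ;<κ)` where the index set `λ` is (the cardinality of) the type `L`:
for every `L`-indexed sequence of open covers of `X`, each of cardinality `≤ mu`, one can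
select subfamilies of cardinality `< kappa` whose union is a cover of `X`. -/
def SatisfiesR (X : Type u) [TopologicalSpace X] (L : Type u) (mu kappa : Cardinal.{u}) : Prop :=
  ∀ U : L → Set (Set X),
    (∀ a, ∀ u ∈ U a, IsOpen u) →
    (∀ a, ⋃₀ U a = Set.univ) →
    (∀ a, #(U a) ≤ mu) →
    ∃ V : L → Set (Set X),
      (∀ a, V a ⊆ U a) ∧ (∀ a, #(V a) < kappa) ∧ ⋃₀ (⋃ a, V a) = Set.univ

/-- A space is initially `μ`-compact if every open cover of cardinality `≤ mu` has a
finite subcover. -/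
def InitiallyMuCompact (X : Type u) [TopologicalSpace X] (mu : Cardinal.{u}) : Prop :=
  ∀ U : Set (Set X), (∀ u ∈ U, IsOpen u) → ⋃₀ U = Set.univ → #U ≤ mu →
    ∃ V ⊆ U, V.Finite ∧ ⋃₀ V = Set.univ

namespace Stmt14Aux

lemma mk_toType' (c : Cardinal.{u}) : #(c.ord.ToType) = c := by
  rw [Cardinal.mk_toType, Cardinal.card_ord]

lemma mk_Iio_lt (c : Cardinal.{u}) (x : c.ord.ToType) : #{y : c.ord.ToType | y < x} < c := by
  letI : IsWellOrder c.ord.ToType (· < ·) := isWellOrder_lt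
  have h := Cardinal.card_typein_lt (α := c.ord.ToType) (r := (· < ·)) x
    (by rw [mk_toType', Ordinal.type_toType])
  rw [mk_toType'] at h
  have : #{y : c.ord.ToType | y < x} = #{ y : c.ord.ToType // y < x } := rfl
  rw [this]
  exact h

lemma exists_strict_bound {c : Cardinal.{u}} (hc : c.IsRegular) (S : Set c.ord.ToType)
    (hS : #S < c) : ∃ b, ∀ s ∈ S, s < b := by
  letI : IsWellOrder c.ord.ToType (· < ·) := isWellOrder_lt
  have hb : ¬ IsCofinal S := by
    intro h
    have := Order.cof_le h
    rw [Ordinal.cof_toType, hc.cof_ord] at this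
    exact absurd hS (not_lt_of_ge this)
  exact not_isCofinal_iff.mp hb

section Main

variable {J : Type u} {X : J → Type u} [∀ j, TopologicalSpace (X j)] [∀ j, Nonempty (X j)]

/-- `s` depends only on coordinates in `B`. -/
def Supp (B : Set J) (s : Set (∀ j, X j)) : Prop :=
  ∀ x y : ∀ j, X j, (∀ j ∈ B, x j = y j) → (x ∈ s ↔ y ∈ s)

lemma Supp.mono {B B' : Set J} {s : Set (∀ j, X j)} (h : Supp B s) (hBB : B ⊆ B') :
    Supp B' s := fun x y hxy => h x y (fun j hj => hxy j (hBB hj))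

/-- an increasing `W`-indexed scale of proper open subsets covering the product,
depending only on coordinates in `B`. -/
structure IsScale (B : Set J) {W : Type u} [Preorder W] (u : W → Set (∀ j, X j)) : Prop where
  isOpen : ∀ w, IsOpen (u w)
  supp : ∀ w, Supp B (u w)
  mono : Monotone u
  total : ⋃ w, u w = Set.univ
  ne : ∀ w, u w ≠ Set.univ

lemma baseScale (mu : Cardinal.{u}) (j : J) (hj : ¬ InitiallyMuCompact (X j) mu) :
    ∃ κ : Cardinal.{u}, κ.IsRegular ∧ κ ≤ mu ∧
      ∃ u : κ.ord.ToType → Set (∀ j, X j), IsScale {j} u := by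
  classical
  unfold InitiallyMuCompact at hj
  push_neg at hj
  obtain ⟨W₀, hW₀open, hW₀cov, hW₀mk, hW₀fin⟩ := hj
  -- the set of cardinalities of bad covers
  set BadC : Set Cardinal.{u} :=
    {c | ∃ W : Set (Set (X j)), (∀ s ∈ W, IsOpen s) ∧ ⋃₀ W = Set.univ ∧ #W = c ∧
      ∀ V ⊆ W, V.Finite → ⋃₀ V ≠ Set.univ} with hBadC
  have hW₀fin' : ∀ V ⊆ W₀, V.Finite → ⋃₀ V ≠ Set.univ := by
    intro V hVW hVfin
    intro hcov
    exact (hW₀fin V hVW hVfin) hcov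
  have hne : BadC.Nonempty := ⟨#W₀, W₀, hW₀open, hW₀cov, rfl, hW₀fin'⟩
  obtain ⟨κ, hκmem, hκmin⟩ := Cardinal.lt_wf.has_min BadC hne
  obtain ⟨W, hWopen, hWcov, hWmk, hWfin⟩ := hκmem
  have hκmu : κ ≤ mu := by
    have := hκmin #W₀ ⟨W₀, hW₀open, hW₀cov, rfl, hW₀fin'⟩
    exact (le_of_not_gt this).trans hW₀mk
  have hκinf : ℵ₀ ≤ κ := by
    by_contra h
    push_neg at h
    rw [← hWmk] at h
    exact hWfin W (subset_refl _) (Cardinal.lt_aleph0_iff_set_finite.mp h) hWcov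
  -- enumerate W
  have : #(κ.ord.ToType) = #W := by rw [mk_toType', hWmk]
  obtain ⟨e⟩ := Cardinal.eq.mp this
  -- increasing unions
  set v : κ.ord.ToType → Set (X j) := fun w => ⋃ (w' : κ.ord.ToType) (_ : w' ≤ w), (e w' : Set (X j))
    with hv
  have hvopen : ∀ w, IsOpen (v w) := by
    intro w
    exact isOpen_iUnion (fun w' => isOpen_iUnion (fun _ => hWopen _ (e w').2))
  have hvmono : Monotone v := by
    intro w w' hww' z hz
    simp only [hv, mem_iUnion] at hz ⊢
    obtain ⟨a, ha, haz⟩ := hz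
    exact ⟨a, ha.trans hww', haz⟩
  have hvtotal : ⋃ w, v w = Set.univ := by
    apply eq_univ_of_forall
    intro z
    have : z ∈ ⋃₀ W := by rw [hWcov]; trivial
    obtain ⟨s, hs, hzs⟩ := this
    refine mem_iUnion.mpr ⟨e.symm ⟨s, hs⟩, ?_⟩
    simp only [hv, mem_iUnion]
    exact ⟨e.symm ⟨s, hs⟩, le_refl _, by simpa using hzs⟩
  -- each v w is a proper subset
  have hvne : ∀ w, v w ≠ Set.univ := by
    intro w hvw
    set V : Set (Set (X j)) := Subtype.val '' (e '' (Iic w)) with hV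
    have hVW : V ⊆ W := by rintro s ⟨t, _, rfl⟩; exact t.2
    have hVcov : ⋃₀ V = Set.univ := by
      rw [← hvw]
      apply subset_antisymm
      · rintro z ⟨s, ⟨t, ⟨w', hw', rfl⟩, rfl⟩, hzs⟩
        exact mem_iUnion.mpr ⟨w', mem_iUnion.mpr ⟨hw', hzs⟩⟩
      · intro z hz
        simp only [hv, mem_iUnion] at hz
        obtain ⟨w', hw', hz⟩ := hz
        exact ⟨(e w' : Set (X j)), ⟨e w', ⟨w', hw', rfl⟩, rfl⟩, hz⟩
    have hVsmall : #V < κ := by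
      calc #V ≤ #(Iic w : Set κ.ord.ToType) := le_trans mk_image_le mk_image_le
      _ ≤ #({y : κ.ord.ToType | y < w}) + 1 := by
          have : (Iic w : Set κ.ord.ToType) ⊆ {y | y < w} ∪ {w} := by
            intro y hy
            rcases lt_or_eq_of_le (mem_Iic.mp hy) with h | h
            · exact Or.inl h
            · exact Or.inr (by simp [h])
          refine le_trans (mk_le_mk_of_subset this) ?_
          refine le_trans (mk_union_le _ _) ?_
          simp
      _ < κ := Cardinal.add_lt_of_lt hκinf (mk_Iio_lt κ w) (one_lt_aleph0.trans_le hκinf)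
    rcases em (∃ V' ⊆ V, V'.Finite ∧ ⋃₀ V' = Set.univ) with ⟨V', hV'V, hV'fin, hV'cov⟩ | hnex
    · exact hWfin V' (hV'V.trans hVW) hV'fin hV'cov
    · push_neg at hnex
      exact hκmin #V ⟨V, fun s hs => hWopen s (hVW hs), hVcov, rfl,
        fun V' h1 h2 => hnex V' h1 h2⟩ hVsmall
  -- regularity of κ
  have hreg : κ.IsRegular := by
    refine ⟨hκinf, ?_⟩
    by_contra hcof
    push_neg at hcof
    letI : IsWellOrder κ.ord.ToType (· < ·) := isWellOrder_lt
    obtain ⟨S, hSunb, hSmk⟩ := Order.exists_cof_eq (α := κ.ord.ToType)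
    rw [Ordinal.cof_toType] at hSmk
    set V2 : Set (Set (X j)) := v '' S with hV2
    have hbound : ∀ V' ⊆ V2, V'.Finite → ∃ b, ⋃₀ V' ⊆ v b := by
      intro V' hV'V2 hV'fin
      induction V', hV'fin using Set.Finite.induction_on with
      | empty =>
        have : Nonempty κ.ord.ToType := by
          rw [Ordinal.toType_nonempty_iff_ne_zero, ne_eq, Cardinal.ord_eq_zero]
          intro h; rw [h] at hκinf; exact (lt_irrefl _ (lt_of_lt_of_le aleph0_pos hκinf))
        exact ⟨Classical.arbitrary _, by simp⟩
      | insert hnotmem hfin ih =>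
        rename_i s V' 
        obtain ⟨b, hb⟩ := ih (fun t ht => hV'V2 (Set.mem_insert_of_mem _ ht))
        obtain ⟨x, _, rfl⟩ := hV'V2 (Set.mem_insert _ _)
        refine ⟨max x b, ?_⟩
        rw [sUnion_insert]
        exact union_subset (hvmono (le_max_left _ _))
          (hb.trans (hvmono (le_max_right _ _)))
    have hV2mem : #V2 ∈ BadC := by
      refine ⟨V2, ?_, ?_, rfl, ?_⟩
      · rintro s ⟨x, _, rfl⟩; exact hvopen x
      · apply eq_univ_of_forall
        intro z
        have : z ∈ ⋃₀ W := by rw [hWcov]; trivial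
        obtain ⟨s, hs, hzs⟩ := this
        obtain ⟨x, hxS, hx⟩ := hSunb (e.symm ⟨s, hs⟩)
        have hle : e.symm ⟨s, hs⟩ ≤ x := hx
        refine ⟨v x, ⟨x, hxS, rfl⟩, ?_⟩
        simp only [hv, mem_iUnion]
        exact ⟨e.symm ⟨s, hs⟩, hle, by simpa using hzs⟩
      · intro V' hV'V2 hV'fin hV'cov
        obtain ⟨b, hb⟩ := hbound V' hV'V2 hV'fin
        rw [hV'cov] at hb
        exact hvne b (eq_univ_of_univ_subset hb)
    have : #V2 < κ := by
      calc #V2 ≤ #S := mk_image_le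
      _ = κ.ord.cof := hSmk
      _ < κ := hcof
    exact hκmin _ hV2mem this
  -- assemble the scale on the product
  refine ⟨κ, hreg, hκmu, fun w => (fun x : ∀ j, X j => x j) ⁻¹' v w, ?_, ?_, ?_, ?_, ?_⟩
  · exact fun w => (hvopen w).preimage (continuous_apply j)
  · intro w x y hxy
    have := hxy j (mem_singleton j)
    simp only [mem_preimage, this]
  · intro w w' hww'
    exact preimage_mono (hvmono hww')
  · apply eq_univ_of_forall
    intro x
    have : x j ∈ ⋃ w, v w := by rw [hvtotal]; trivial
    obtain ⟨s, ⟨w, rfl⟩, hx⟩ := this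
    exact mem_iUnion.mpr ⟨w, hx⟩
  · intro w hw
    apply hvne w
    apply eq_univ_of_forall
    intro z
    have hx : Function.update (Classical.arbitrary (∀ j, X j)) j z ∈
        (fun x : ∀ j, X j => x j) ⁻¹' v w := by rw [hw]; trivial
    simpa using hx

-- more Supp lemmas
lemma Supp.inter {B : Set J} {s t : Set (∀ j, X j)} (hs : Supp B s) (ht : Supp B t) :
    Supp B (s ∩ t) := fun x y hxy => by
  rw [Set.mem_inter_iff, Set.mem_inter_iff, hs x y hxy, ht x y hxy]

lemma Supp.empty {B : Set J} : Supp B (∅ : Set (∀ j, X j)) := fun x y _ => Iff.rfl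

lemma Supp.iUnion {B : Set J} {ι : Sort*} {s : ι → Set (∀ j, X j)} (h : ∀ i, Supp B (s i)) :
    Supp B (⋃ i, s i) := fun x y hxy => by
  simp only [Set.mem_iUnion]
  exact exists_congr (fun i => h i x y hxy)

lemma mk_Iic_lt {c : Cardinal.{u}} (hc : ℵ₀ ≤ c) (x : c.ord.ToType) :
    #{y : c.ord.ToType | y ≤ x} < c := by
  have hsub : {y : c.ord.ToType | y ≤ x} ⊆ {y | y < x} ∪ {x} := by
    intro y hy
    rcases lt_or_eq_of_le (show y ≤ x from hy) with h | h
    · exact Or.inl h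
    · exact Or.inr (by simp [h])
  calc #{y : c.ord.ToType | y ≤ x} ≤ #({y : c.ord.ToType | y < x} ∪ {x} : Set c.ord.ToType) :=
        mk_le_mk_of_subset hsub
  _ ≤ #{y : c.ord.ToType | y < x} + #({x} : Set c.ord.ToType) := mk_union_le _ _
  _ = #{y : c.ord.ToType | y < x} + 1 := by rw [mk_singleton]
  _ < c := Cardinal.add_lt_of_lt hc (mk_Iio_lt c x) (one_lt_aleph0.trans_le hc)

lemma bootstrap (κ ν : Cardinal.{u}) (hκ : κ.IsRegular) (hνreg : ν.IsRegular) (hκν : κ < ν)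
    (hseg : ∀ x : ν.ord.ToType, #{y : ν.ord.ToType | y < x} ≤ κ)
    (B : ν.ord.ToType → Set J)
    (hdisj : ∀ i i' : ν.ord.ToType, i ≠ i' → Disjoint (B i) (B i'))
    (u : ν.ord.ToType → κ.ord.ToType → Set (∀ j, X j))
    (hscale : ∀ i, IsScale (B i) (u i)) :
    ∃ U : ν.ord.ToType → Set (∀ j, X j), IsScale (⋃ i, B i) U := by
  classical
  have hνinf : ℵ₀ ≤ ν := hνreg.aleph0_le
  haveI hW1ne : Nonempty κ.ord.ToType := by
    rw [Ordinal.toType_nonempty_iff_ne_zero, ne_eq, Cardinal.ord_eq_zero]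
    intro h; rw [h] at hκ; exact (lt_irrefl _ (lt_of_lt_of_le aleph0_pos hκ.aleph0_le))
  haveI hXne : Nonempty (∀ j, X j) := ⟨fun j => Classical.arbitrary _⟩
  -- unboundedness of subsets of size > κ
  have hgt : ∀ (S : Set ν.ord.ToType), ¬ #S ≤ κ → ∀ b : ν.ord.ToType, ∃ s ∈ S, b ≤ s := by
    intro S hS b
    by_contra hcon
    push_neg at hcon
    exact hS ((mk_le_mk_of_subset (fun y hy => hcon y hy)).trans (hseg b))
  -- injections from initial segments into κ
  have he : ∀ jj : ν.ord.ToType, Nonempty ({i : ν.ord.ToType // i < jj} ↪ κ.ord.ToType) := by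
    intro jj
    rw [← Cardinal.le_def, mk_toType']
    exact hseg jj
  let e : ∀ jj : ν.ord.ToType, {i : ν.ord.ToType // i < jj} ↪ κ.ord.ToType :=
    fun jj => (he jj).some
  let c' : ν.ord.ToType × ν.ord.ToType → κ.ord.ToType :=
    fun p => if h : p.1 < p.2 then e p.2 ⟨p.1, h⟩ else Classical.arbitrary _
  let C : ν.ord.ToType × ν.ord.ToType → Set (∀ j, X j) :=
    fun p => if p.1 < p.2 then u p.1 (c' p) ∩ u p.2 (c' p) else ∅
  have hCpos : ∀ p : ν.ord.ToType × ν.ord.ToType, p.1 < p.2 →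
      C p = u p.1 (c' p) ∩ u p.2 (c' p) := by
    intro p hp; simp only [C, if_pos hp]
  have hCneg : ∀ p : ν.ord.ToType × ν.ord.ToType, ¬ p.1 < p.2 → C p = ∅ := by
    intro p hp; simp only [C, if_neg hp]
  have hCopen : ∀ p, IsOpen (C p) := by
    intro p
    by_cases hp : p.1 < p.2
    · rw [hCpos p hp]; exact ((hscale _).isOpen _).inter ((hscale _).isOpen _)
    · rw [hCneg p hp]; exact isOpen_empty
  have hCsupp : ∀ p, Supp (⋃ i, B i) (C p) := by
    intro p
    by_cases hp : p.1 < p.2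
    · rw [hCpos p hp]
      exact (((hscale _).supp _).mono (subset_iUnion B p.1)).inter
        (((hscale _).supp _).mono (subset_iUnion B p.2))
    · rw [hCneg p hp]; exact Supp.empty
  -- the cover property
  have hcover : ∀ x : ∀ j, X j, ∃ p : ν.ord.ToType × ν.ord.ToType, p.1 < p.2 ∧ x ∈ C p := by
    intro x
    have hx : ∀ i : ν.ord.ToType, ∃ w, x ∈ u i w := by
      intro i
      have h2 : x ∈ ⋃ w, u i w := by rw [(hscale i).total]; trivial
      exact mem_iUnion.mp h2
    let h : ν.ord.ToType → κ.ord.ToType := fun i => (hx i).choose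
    have hxh : ∀ i, x ∈ u i (h i) := fun i => (hx i).choose_spec
    -- a big fiber
    have hfib : ∃ ξ : κ.ord.ToType, ¬ #{i : ν.ord.ToType | h i = ξ} ≤ κ := by
      by_contra hcon
      push_neg at hcon
      have huniv : (Set.univ : Set ν.ord.ToType) = ⋃ ξ : κ.ord.ToType, {i | h i = ξ} := by
        ext i; simp
      have hle : ν ≤ κ := by
        calc ν = #(Set.univ : Set ν.ord.ToType) := by rw [mk_univ, mk_toType']
        _ = #(⋃ ξ : κ.ord.ToType, {i : ν.ord.ToType | h i = ξ}) := by rw [huniv]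
        _ ≤ #(κ.ord.ToType) * ⨆ ξ : κ.ord.ToType, #{i : ν.ord.ToType | h i = ξ} :=
            mk_iUnion_le _
        _ ≤ κ * κ := by
            refine mul_le_mul' (le_of_eq (mk_toType' κ)) ?_
            exact ciSup_le' (fun ξ => hcon ξ)
        _ = κ := Cardinal.mul_eq_self hκ.aleph0_le
      exact (not_lt_of_ge hle) hκν
    obtain ⟨ξ0, hξ0⟩ := hfib
    -- an embedding of κ into the fiber F
    have hφ : Nonempty (κ.ord.ToType ↪ ↥{i : ν.ord.ToType | h i = ξ0}) := by
      rw [← Cardinal.le_def, mk_toType']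
      by_contra hcon
      push_neg at hcon
      exact hξ0 (le_of_lt hcon)
    obtain ⟨φ⟩ := hφ
    -- bound the range of φ
    have hrange : #((fun i => (φ i : ν.ord.ToType)) '' Set.univ) < ν := by
      refine lt_of_le_of_lt mk_image_le ?_
      rw [mk_univ, mk_toType']
      exact hκν
    obtain ⟨b, hb⟩ := exists_strict_bound hνreg _ hrange
    obtain ⟨jj, hjjF, hjjb⟩ := hgt {i : ν.ord.ToType | h i = ξ0} hξ0 b
    have hφlt : ∀ i, (φ i : ν.ord.ToType) < jj := by
      intro i
      exact lt_of_lt_of_le (hb _ ⟨i, trivial, rfl⟩) hjjb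
    -- the composed injective map into κ is unbounded
    let ψ : κ.ord.ToType → κ.ord.ToType := fun i => c' ((φ i : ν.ord.ToType), jj)
    have hψeq : ∀ i, ψ i = e jj ⟨(φ i : ν.ord.ToType), hφlt i⟩ := by
      intro i
      simp only [ψ, c', dif_pos (hφlt i)]
    have hψinj : Function.Injective ψ := by
      intro i1 i2 h12
      rw [hψeq i1, hψeq i2] at h12
      have h3 := (e jj).injective h12
      have h4 := congrArg (fun q : {i : ν.ord.ToType // i < jj} => (q : ν.ord.ToType)) h3
      exact φ.injective (Subtype.ext h4)
    have hψbig : ¬ #(Set.range ψ) < κ := by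
      rw [Cardinal.mk_range_eq _ hψinj, mk_toType']
      exact lt_irrefl κ
    have hψgt : ∃ y ∈ Set.range ψ, ξ0 ≤ y := by
      by_contra hcon
      push_neg at hcon
      exact hψbig (lt_of_le_of_lt (mk_le_mk_of_subset (fun y hy => hcon y hy)) (mk_Iio_lt κ ξ0))
    obtain ⟨y, ⟨i0, rfl⟩, hy⟩ := hψgt
    refine ⟨((φ i0 : ν.ord.ToType), jj), hφlt i0, ?_⟩
    rw [hCpos _ (hφlt i0)]
    constructor
    · refine (hscale _).mono hy ?_
      have h5 : h (φ i0 : ν.ord.ToType) = ξ0 := (φ i0).2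
      have h6 := hxh (φ i0 : ν.ord.ToType)
      rwa [h5] at h6
    · refine (hscale _).mono hy ?_
      have h5 : h jj = ξ0 := hjjF
      have h6 := hxh jj
      rwa [h5] at h6
  -- pairing embedding
  have hpc : Nonempty (ν.ord.ToType × ν.ord.ToType ↪ ν.ord.ToType) := by
    rw [← Cardinal.le_def]
    apply le_of_eq
    rw [← Cardinal.mul_def, mk_toType', Cardinal.mul_eq_self hνinf]
  obtain ⟨pc⟩ := hpc
  -- the scale
  refine ⟨fun ζ => ⋃ (p : ν.ord.ToType × ν.ord.ToType) (_ : pc p < ζ), C p, ?_, ?_, ?_, ?_, ?_⟩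
  · intro ζ
    exact isOpen_iUnion (fun p => isOpen_iUnion (fun _ => hCopen p))
  · intro ζ
    exact Supp.iUnion (fun p => Supp.iUnion (fun _ => hCsupp p))
  · intro ζ ζ' hζζ' x hx
    simp only [mem_iUnion] at hx ⊢
    obtain ⟨p, hp, hxp⟩ := hx
    exact ⟨p, lt_of_lt_of_le hp hζζ', hxp⟩
  · apply eq_univ_of_forall
    intro x
    obtain ⟨p, hplt, hxp⟩ := hcover x
    have h1 : #({pc p} : Set ν.ord.ToType) < ν := by
      rw [mk_singleton]
      exact lt_of_lt_of_le one_lt_aleph0 hνinf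
    obtain ⟨ζ, hζ⟩ := exists_strict_bound hνreg _ h1
    refine mem_iUnion.mpr ⟨ζ, ?_⟩
    simp only [mem_iUnion]
    exact ⟨p, hζ (pc p) rfl, hxp⟩
  · -- properness: the escape argument
    intro ζ hζuniv
    set P : Set (ν.ord.ToType × ν.ord.ToType) := {p | pc p < ζ ∧ p.1 < p.2} with hP
    have hPmk : #P ≤ κ := by
      have hinj : Function.Injective
          (fun p : ↥P => (⟨pc p, p.2.1⟩ : {y : ν.ord.ToType | y < ζ})) := by
        intro p1 p2 h12
        have h13 := congrArg Subtype.val h12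
        exact Subtype.ext (pc.injective h13)
      exact (Cardinal.mk_le_of_injective hinj).trans (hseg ζ)
    set T : Set ν.ord.ToType := (fun p : ν.ord.ToType × ν.ord.ToType => p.1) '' P ∪
      (fun p : ν.ord.ToType × ν.ord.ToType => p.2) '' P with hT
    have hTmk : #T ≤ κ := by
      calc #T ≤ #((fun p : ν.ord.ToType × ν.ord.ToType => p.1) '' P) +
          #((fun p : ν.ord.ToType × ν.ord.ToType => p.2) '' P) := mk_union_le _ _
      _ ≤ κ + κ := add_le_add (mk_image_le.trans hPmk) (mk_image_le.trans hPmk)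
      _ = κ := Cardinal.add_eq_self hκ.aleph0_le
    have hψT : Nonempty (↥T ↪ κ.ord.ToType) := by
      rw [← Cardinal.le_def, mk_toType']
      exact hTmk
    obtain ⟨ψT⟩ := hψT
    -- responsibility sets
    let Pt : ↥T → Set (ν.ord.ToType × ν.ord.ToType) := fun t =>
      {p | p ∈ P ∧ ∃ (h1 : p.1 ∈ T) (h2 : p.2 ∈ T),
        (ψT ⟨p.1, h1⟩ < ψT ⟨p.2, h2⟩ ∧ p.2 = ↑t) ∨
        (¬ ψT ⟨p.1, h1⟩ < ψT ⟨p.2, h2⟩ ∧ p.1 = ↑t)}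
    have hPtmk : ∀ t, #(c' '' Pt t) < κ := by
      intro t
      refine lt_of_le_of_lt mk_image_le ?_
      let S1 : Set (ν.ord.ToType × ν.ord.ToType) :=
        {p | ∃ (h1 : p.1 ∈ T), ψT ⟨p.1, h1⟩ ≤ ψT t ∧ p.2 = ↑t}
      let S2 : Set (ν.ord.ToType × ν.ord.ToType) :=
        {p | ∃ (h2 : p.2 ∈ T), ψT ⟨p.2, h2⟩ ≤ ψT t ∧ p.1 = ↑t}
      have hsub : Pt t ⊆ S1 ∪ S2 := by
        rintro p ⟨hpP, h1, h2, hor⟩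
        rcases hor with ⟨hcmp, heq⟩ | ⟨hcmp, heq⟩
        · left
          refine ⟨h1, ?_, heq⟩
          have : (⟨p.2, h2⟩ : ↥T) = t := Subtype.ext heq
          rw [← this]
          exact le_of_lt hcmp
        · right
          refine ⟨h2, ?_, heq⟩
          have : (⟨p.1, h1⟩ : ↥T) = t := Subtype.ext heq
          rw [← this]
          exact not_lt.mp hcmp
      have hS1 : #S1 ≤ #{w : κ.ord.ToType | w ≤ ψT t} := by
        refine Cardinal.mk_le_of_injective
          (f := fun p : ↥S1 => (⟨ψT ⟨(p : ν.ord.ToType × ν.ord.ToType).1, p.2.choose⟩,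
            p.2.choose_spec.1⟩ : {w : κ.ord.ToType | w ≤ ψT t})) ?_
        intro p q hpq
        have hval := congrArg Subtype.val hpq
        have h5 := ψT.injective hval
        have h6 := congrArg (fun q : ↥T => (q : ν.ord.ToType)) h5
        refine Subtype.ext (Prod.ext h6 ?_)
        rw [p.2.choose_spec.2, q.2.choose_spec.2]
      have hS2 : #S2 ≤ #{w : κ.ord.ToType | w ≤ ψT t} := by
        refine Cardinal.mk_le_of_injective
          (f := fun p : ↥S2 => (⟨ψT ⟨(p : ν.ord.ToType × ν.ord.ToType).2, p.2.choose⟩,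
            p.2.choose_spec.1⟩ : {w : κ.ord.ToType | w ≤ ψT t})) ?_
        intro p q hpq
        have hval := congrArg Subtype.val hpq
        have h5 := ψT.injective hval
        have h6 := congrArg (fun q : ↥T => (q : ν.ord.ToType)) h5
        refine Subtype.ext (Prod.ext ?_ h6)
        rw [p.2.choose_spec.2, q.2.choose_spec.2]
      calc #(Pt t) ≤ #(S1 ∪ S2 : Set (ν.ord.ToType × ν.ord.ToType)) := mk_le_mk_of_subset hsub
      _ ≤ #S1 + #S2 := mk_union_le _ _
      _ ≤ #{w : κ.ord.ToType | w ≤ ψT t} + #{w : κ.ord.ToType | w ≤ ψT t} := add_le_add hS1 hS2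
      _ < κ := Cardinal.add_lt_of_lt hκ.aleph0_le (mk_Iic_lt hκ.aleph0_le _)
          (mk_Iic_lt hκ.aleph0_le _)
    -- strict bounds and witnesses
    have hβ : ∀ t : ↥T, ∃ β : κ.ord.ToType, ∀ w ∈ c' '' Pt t, w < β :=
      fun t => exists_strict_bound hκ _ (hPtmk t)
    let β : ↥T → κ.ord.ToType := fun t => (hβ t).choose
    have hβsp : ∀ t : ↥T, ∀ p ∈ Pt t, c' p < β t := by
      intro t p hp
      exact (hβ t).choose_spec _ ⟨p, hp, rfl⟩
    have hz : ∀ t : ↥T, ∃ z : ∀ j, X j, z ∉ u ↑t (β t) := by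
      intro t
      have := (hscale (↑t : ν.ord.ToType)).ne (β t)
      rw [ne_eq, eq_univ_iff_forall] at this
      push_neg at this
      exact this
    let z : ↥T → ∀ j, X j := fun t => (hz t).choose
    have hzsp : ∀ t : ↥T, z t ∉ u (↑t) (β t) := fun t => (hz t).choose_spec
    let p0 : ∀ j, X j := Classical.arbitrary _
    let x : ∀ j, X j := fun j => if hj : ∃ t : ↥T, j ∈ B ↑t then z hj.choose j else p0 j
    have hagree : ∀ t : ↥T, ∀ j ∈ B ↑t, x j = z t j := by
      intro t j hjB
      have hj : ∃ t' : ↥T, j ∈ B ↑t' := ⟨t, hjB⟩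
      have hch := hj.choose_spec
      have : hj.choose = t := by
        by_contra hne
        have hvalne : (hj.choose : ν.ord.ToType) ≠ ↑t := fun hv => hne (Subtype.ext hv)
        exact (hdisj _ _ hvalne).ne_of_mem hch hjB rfl
      simp only [x, dif_pos hj]
      rw [this]
    -- x is not covered
    have hxmem : x ∈ ⋃ (p : ν.ord.ToType × ν.ord.ToType) (_ : pc p < ζ), C p := by
      rw [hζuniv]; trivial
    simp only [mem_iUnion] at hxmem
    obtain ⟨p, hpζ, hxp⟩ := hxmem
    have hplt : p.1 < p.2 := by
      by_contra hcon
      rw [hCneg p hcon] at hxp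
      exact hxp
    have hpP : p ∈ P := ⟨hpζ, hplt⟩
    have h1 : p.1 ∈ T := Or.inl ⟨p, hpP, rfl⟩
    have h2 : p.2 ∈ T := Or.inr ⟨p, hpP, rfl⟩
    rw [hCpos p hplt] at hxp
    by_cases hcmp : ψT ⟨p.1, h1⟩ < ψT ⟨p.2, h2⟩
    · -- responsible endpoint is p.2
      set t : ↥T := ⟨p.2, h2⟩ with ht
      have hpPt : p ∈ Pt t := ⟨hpP, h1, h2, Or.inl ⟨hcmp, rfl⟩⟩
      have hclt : c' p < β t := hβsp t p hpPt
      have hxin : x ∈ u p.2 (β t) := (hscale _).mono (le_of_lt hclt) hxp.2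
      have : z t ∈ u ↑t (β t) := by
        have hsupp := (hscale (↑t : ν.ord.ToType)).supp (β t)
        exact (hsupp x (z t) (hagree t)).mp hxin
      exact hzsp t this
    · set t : ↥T := ⟨p.1, h1⟩ with ht
      have hpPt : p ∈ Pt t := ⟨hpP, h1, h2, Or.inr ⟨hcmp, rfl⟩⟩
      have hclt : c' p < β t := hβsp t p hpPt
      have hxin : x ∈ u p.1 (β t) := (hscale _).mono (le_of_lt hclt) hxp.1
      have : z t ∈ u ↑t (β t) := by
        have hsupp := (hscale (↑t : ν.ord.ToType)).supp (β t)
        exact (hsupp x (z t) (hagree t)).mp hxin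
      exact hzsp t this

lemma final (n : ℕ) (L : Type u) (hL : #L = Cardinal.aleph (n + 1))
    (mu : Cardinal.{u}) (hR : SatisfiesR (∀ j, X j) L mu (Cardinal.aleph (n + 1)))
    (B : L → Set J) (hdisj : ∀ a a' : L, a ≠ a' → Disjoint (B a) (B a'))
    (good : ∀ a : L, ∃ (c : Cardinal.{u}) (u : c.ord.ToType → Set (∀ j, X j)),
      c.IsRegular ∧ Cardinal.aleph n < c ∧ c ≤ mu ∧ IsScale (B a) u) : False := by
  classical
  haveI hXne : Nonempty (∀ j, X j) := ⟨fun j => Classical.arbitrary _⟩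
  have halsucc : Cardinal.aleph (n + 1) = Order.succ (Cardinal.aleph n) := by
    have h0 : ((n : Ordinal) + 1) = Order.succ (n : Ordinal) := Ordinal.add_one_eq_succ _
    rw [h0, Cardinal.aleph_succ]
  let c : L → Cardinal.{u} := fun a => (good a).choose
  let uu : ∀ a : L, (c a).ord.ToType → Set (∀ j, X j) := fun a => (good a).choose_spec.choose
  have hprop : ∀ a : L, (c a).IsRegular ∧ Cardinal.aleph n < c a ∧ c a ≤ mu ∧
      IsScale (B a) (uu a) := fun a => (good a).choose_spec.choose_spec
  -- the covers
  obtain ⟨V, hVsub, hVlt, hVcov⟩ := hR (fun a => Set.range (uu a))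
    (by rintro a s ⟨w, rfl⟩; exact (hprop a).2.2.2.isOpen w)
    (by
      intro a
      rw [Set.sUnion_range]
      exact (hprop a).2.2.2.total)
    (by
      intro a
      refine mk_range_le.trans ?_
      rw [mk_toType']
      exact (hprop a).2.2.1)
  -- bound each selection
  have hbound : ∀ a : L, ∃ b : (c a).ord.ToType, ⋃₀ (V a) ⊆ uu a b := by
    intro a
    have hg : ∀ v : ↥(V a), ∃ w, (v : Set (∀ j, X j)) = uu a w :=
      fun v => (hVsub a v.2).imp (fun w hw => hw.symm)
    have hTmk : #(Set.range (fun v : ↥(V a) => (hg v).choose)) < c a := by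
      refine lt_of_le_of_lt mk_range_le ?_
      refine lt_of_le_of_lt ?_ (hprop a).2.1
      have := hVlt a
      rw [halsucc, Order.lt_succ_iff] at this
      exact this
    obtain ⟨b, hb⟩ := exists_strict_bound (hprop a).1 _ hTmk
    refine ⟨b, ?_⟩
    rintro x ⟨v, hv, hxv⟩
    have h1 : (v : Set (∀ j, X j)) = uu a (hg ⟨v, hv⟩).choose := (hg ⟨v, hv⟩).choose_spec
    have h2 : (hg ⟨v, hv⟩).choose < b := hb _ ⟨⟨v, hv⟩, rfl⟩
    exact (hprop a).2.2.2.mono (le_of_lt h2) (h1 ▸ hxv)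
  let b : ∀ a : L, (c a).ord.ToType := fun a => (hbound a).choose
  have hbsp : ∀ a : L, ⋃₀ (V a) ⊆ uu a (b a) := fun a => (hbound a).choose_spec
  -- escape point
  have hz : ∀ a : L, ∃ z : ∀ j, X j, z ∉ uu a (b a) := by
    intro a
    have := (hprop a).2.2.2.ne (b a)
    rw [ne_eq, eq_univ_iff_forall] at this
    push_neg at this
    exact this
  let z : L → ∀ j, X j := fun a => (hz a).choose
  have hzsp : ∀ a, z a ∉ uu a (b a) := fun a => (hz a).choose_spec
  let p0 : ∀ j, X j := Classical.arbitrary _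
  let x : ∀ j, X j := fun j => if hj : ∃ a : L, j ∈ B a then z hj.choose j else p0 j
  have hagree : ∀ a : L, ∀ j ∈ B a, x j = z a j := by
    intro a j hjB
    have hj : ∃ a' : L, j ∈ B a' := ⟨a, hjB⟩
    have hch := hj.choose_spec
    have : hj.choose = a := by
      by_contra hne
      exact (hdisj _ _ hne).ne_of_mem hch hjB rfl
    simp only [x, dif_pos hj]
    rw [this]
  have hxmem : x ∈ ⋃₀ (⋃ a, V a) := by rw [hVcov]; trivial
  obtain ⟨v, hv, hxv⟩ := hxmem
  rw [mem_iUnion] at hv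
  obtain ⟨a, hva⟩ := hv
  have hx1 : x ∈ uu a (b a) := hbsp a ⟨v, hva, hxv⟩
  have hx2 : z a ∈ uu a (b a) :=
    ((hprop a).2.2.2.supp (b a) x (z a) (hagree a)).mp hx1
  exact hzsp a hx2

lemma aleph_nat_succ' (k : ℕ) :
    Cardinal.aleph ((k : Ordinal) + 1) = Order.succ (Cardinal.aleph (k : Ordinal)) := by
  rw [Ordinal.add_one_eq_succ, Cardinal.aleph_succ]

lemma aleph_nat_regular (k : ℕ) : (Cardinal.aleph (k : Ordinal)).IsRegular := by
  cases k with
  | zero =>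
    simp only [Nat.cast_zero, Cardinal.aleph_zero]
    exact Cardinal.isRegular_aleph0
  | succ k =>
    have h1 : ((k + 1 : ℕ) : Ordinal) = (k : Ordinal) + 1 := by push_cast; ring
    rw [h1, aleph_nat_succ' k]
    exact Cardinal.isRegular_succ (Cardinal.aleph0_le_aleph _)

lemma aleph_nat_succ'' (m : ℕ) :
    Cardinal.aleph (((m + 1 : ℕ)) : Ordinal) = Order.succ (Cardinal.aleph (m : Ordinal)) := by
  have h : ((m + 1 : ℕ) : Ordinal) = (m : Ordinal) + 1 := by push_cast; ring
  rw [h, aleph_nat_succ']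

lemma scale_congr {c c' : Cardinal.{u}} (h : c = c') {B : Set J}
    (hs : ∃ u : c.ord.ToType → Set (∀ j, X j), IsScale B u) :
    ∃ u : c'.ord.ToType → Set (∀ j, X j), IsScale B u := by
  subst h; exact hs

lemma main_theorem (n : ℕ) (L : Type u) (hL : #L = Cardinal.aleph (n + 1))
    (mu : Cardinal.{u}) (hmu : Cardinal.aleph (n + 1) ≤ mu)
    (hR : SatisfiesR (∀ j, X j) L mu (Cardinal.aleph (n + 1))) :
    #{j : J | ¬ InitiallyMuCompact (X j) mu} ≤ Cardinal.aleph n := by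
  classical
  by_contra hbig
  set bad := {j : J | ¬ InitiallyMuCompact (X j) mu} with hbad
  have hbase : ∀ j : ↥bad, ∃ κ : Cardinal.{u}, κ.IsRegular ∧ κ ≤ mu ∧
      ∃ u : κ.ord.ToType → Set (∀ j, X j), IsScale {(j : J)} u :=
    fun j => baseScale mu (j : J) j.2
  let κb : ↥bad → Cardinal.{u} := fun j => (hbase j).choose
  have hκreg : ∀ j, (κb j).IsRegular := fun j => (hbase j).choose_spec.1
  have hκmu : ∀ j, κb j ≤ mu := fun j => (hbase j).choose_spec.2.1
  have hscl : ∀ j : ↥bad, ∃ u : (κb j).ord.ToType → Set (∀ j, X j), IsScale {(j : J)} u :=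
    fun j => (hbase j).choose_spec.2.2
  -- classification
  have hsmallc : ∀ j : ↥bad, κb j ≤ Cardinal.aleph (n : Ordinal) →
      ∃ k : ℕ, k ≤ n ∧ κb j = Cardinal.aleph (k : Ordinal) := by
    intro j hle
    obtain ⟨o, ho⟩ := Cardinal.mem_range_aleph_iff.2 (hκreg j).aleph0_le
    rw [← ho] at hle ⊢
    have hon : o ≤ (n : Ordinal) := Cardinal.aleph_le_aleph.mp hle
    have hlt : o < Ordinal.omega0 := lt_of_le_of_lt hon (Ordinal.nat_lt_omega0 n)
    obtain ⟨m, rfl⟩ := Ordinal.lt_omega0.mp hlt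
    exact ⟨m, by exact_mod_cast hon, rfl⟩
  let F' : ↥bad → Fin (n + 2) := fun j =>
    if h : κb j ≤ Cardinal.aleph (n : Ordinal)
    then ⟨min (hsmallc j h).choose n, by omega⟩
    else ⟨n + 1, by omega⟩
  -- pigeonhole
  have hfib : ∃ k : Fin (n + 2), ¬ #(F' ⁻¹' {k}) ≤ Cardinal.aleph (n : Ordinal) := by
    by_contra hcon
    push_neg at hcon
    apply hbig
    have huniv : (Set.univ : Set ↥bad) =
        ⋃ k : ULift.{u} (Fin (n + 2)), F' ⁻¹' {k.down} := by
      ext j; simp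
    calc #bad = #(Set.univ : Set ↥bad) := by rw [mk_univ]
    _ = #(⋃ k : ULift.{u} (Fin (n + 2)), F' ⁻¹' {k.down}) := by rw [huniv]
    _ ≤ #(ULift.{u} (Fin (n + 2))) * ⨆ k : ULift.{u} (Fin (n + 2)), #(F' ⁻¹' {k.down}) :=
        mk_iUnion_le _
    _ ≤ Cardinal.aleph (n : Ordinal) * Cardinal.aleph (n : Ordinal) := by
        refine mul_le_mul' ?_ (ciSup_le' (fun k => hcon k.down))
        rw [Cardinal.mk_uLift, Cardinal.mk_fin, Cardinal.lift_natCast]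
        exact (Cardinal.nat_lt_aleph0 _).le.trans (Cardinal.aleph0_le_aleph _)
    _ = Cardinal.aleph (n : Ordinal) := Cardinal.mul_eq_self (Cardinal.aleph0_le_aleph _)
  obtain ⟨k, hk⟩ := hfib
  -- an aleph_{n+1}-sized family inside the fiber
  have hemb : Nonempty ((Cardinal.aleph ((n : Ordinal) + 1)).ord.ToType ↪ ↥(F' ⁻¹' {k})) := by
    rw [← Cardinal.le_def, mk_toType', Ordinal.add_one_eq_succ, Cardinal.aleph_succ]
    exact Order.succ_le_of_lt (not_le.mp hk)
  obtain ⟨ι⟩ := hemb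
  have hιfib : ∀ d, F' ((ι d : ↥bad)) = k := fun d => (ι d).2
  let ιJ : (Cardinal.aleph ((n : Ordinal) + 1)).ord.ToType → J := fun d => ((ι d : ↥bad) : J)
  have hιJinj : Function.Injective ιJ := by
    intro d1 d2 h12
    exact ι.injective (Subtype.ext (Subtype.ext h12))
  obtain ⟨E⟩ : Nonempty (L ≃ (Cardinal.aleph ((n : Ordinal) + 1)).ord.ToType) := by
    rw [← Cardinal.eq, hL, mk_toType']
  by_cases hklast : (k : ℕ) = n + 1
  · -- the large class: singleton blocks directly
    refine final n L hL mu hR (fun a => {ιJ (E a)}) ?_ ?_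
    · intro a a' haa'
      rw [Set.disjoint_singleton]
      exact fun h => haa' (E.injective (hιJinj h))
    · intro a
      obtain ⟨u, hu⟩ := hscl (ι (E a))
      refine ⟨κb (ι (E a)), u, hκreg _, ?_, hκmu _, hu⟩
      by_contra hcon
      push_neg at hcon
      have h1 := hιfib (E a)
      simp only [F', dif_pos hcon] at h1
      have h2 := congrArg Fin.val h1
      simp only [hklast] at h2
      omega
  · -- the small class: iterated bootstrap
    have hκval : ∀ j : ↥bad, F' j = k → κb j = Cardinal.aleph (((k : ℕ) : ℕ) : Ordinal) := by
      intro j hj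
      by_cases h : κb j ≤ Cardinal.aleph (n : Ordinal)
      · obtain ⟨hle, heq⟩ := (hsmallc j h).choose_spec
        simp only [F', dif_pos h] at hj
        have h2 := congrArg Fin.val hj
        simp only at h2
        rw [heq]
        congr 1
        exact_mod_cast (by omega : (hsmallc j h).choose = (k : ℕ))
      · simp only [F', dif_neg h] at hj
        have h2 := congrArg Fin.val hj
        simp only at h2
        omega
    have hQ : ∀ i : ℕ, (k : ℕ) + i ≤ n + 1 →
        ∃ B : (Cardinal.aleph ((n : Ordinal) + 1)).ord.ToType → Set J,
          (∀ d d', d ≠ d' → Disjoint (B d) (B d')) ∧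
          (∀ d, ∃ u : (Cardinal.aleph ((((k : ℕ) + i : ℕ)) : Ordinal)).ord.ToType →
            Set (∀ j, X j), IsScale (B d) u) := by
      intro i
      induction i with
      | zero =>
        intro _
        refine ⟨fun d => {ιJ d}, ?_, ?_⟩
        · intro d d' hdd'
          rw [Set.disjoint_singleton]
          exact fun h => hdd' (hιJinj h)
        · intro d
          exact scale_congr (hκval (ι d) (hιfib d)) (hscl (ι d))
      | succ i ih =>
        intro hle
        obtain ⟨B, hdj, hsc⟩ := ih (by omega)
        choose uB huB using hsc
        obtain ⟨E2⟩ : Nonempty ((Cardinal.aleph ((n : Ordinal) + 1)).ord.ToType ≃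
            (Cardinal.aleph ((n : Ordinal) + 1)).ord.ToType ×
            (Cardinal.aleph ((((k : ℕ) + i + 1 : ℕ)) : Ordinal)).ord.ToType) := by
          rw [← Cardinal.eq, ← Cardinal.mul_def, mk_toType', mk_toType']
          rw [Cardinal.mul_eq_max (Cardinal.aleph0_le_aleph _) (Cardinal.aleph0_le_aleph _)]
          rw [max_eq_left]
          apply Cardinal.aleph_le_aleph.mpr
          have h1 : (((k : ℕ) + i + 1 : ℕ) : Ordinal) ≤ ((n + 1 : ℕ) : Ordinal) := by
            exact_mod_cast (by omega : (k : ℕ) + i + 1 ≤ n + 1)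
          have h2 : ((n + 1 : ℕ) : Ordinal) = (n : Ordinal) + 1 := by push_cast; ring
          rw [h2] at h1
          exact h1
        have hseg : ∀ x : (Cardinal.aleph ((((k : ℕ) + i + 1 : ℕ)) : Ordinal)).ord.ToType,
            #{y | y < x} ≤ Cardinal.aleph ((((k : ℕ) + i : ℕ)) : Ordinal) := by
          intro x
          have h1 := mk_Iio_lt (Cardinal.aleph ((((k : ℕ) + i + 1 : ℕ)) : Ordinal)) x
          have h3 := lt_of_lt_of_eq h1 (aleph_nat_succ'' ((k : ℕ) + i))
          exact Order.lt_succ_iff.mp h3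
        refine ⟨fun d => ⋃ i', B (E2.symm (d, i')), ?_, ?_⟩
        · intro d d' hdd'
          rw [Set.disjoint_iUnion_left]
          intro i1
          rw [Set.disjoint_iUnion_right]
          intro i2
          apply hdj
          intro heq
          have h3 := E2.symm.injective heq
          exact hdd' (congrArg Prod.fst h3)
        · intro d
          have hκν : Cardinal.aleph ((((k : ℕ) + i : ℕ)) : Ordinal) <
              Cardinal.aleph ((((k : ℕ) + i + 1 : ℕ)) : Ordinal) := by
            apply Cardinal.aleph_lt_aleph.mpr
            exact_mod_cast (by omega : (k : ℕ) + i < (k : ℕ) + i + 1)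
          obtain ⟨U, hU⟩ := bootstrap (Cardinal.aleph ((((k : ℕ) + i : ℕ)) : Ordinal))
            (Cardinal.aleph ((((k : ℕ) + i + 1 : ℕ)) : Ordinal))
            (aleph_nat_regular _) (aleph_nat_regular _) hκν hseg
            (fun i' => B (E2.symm (d, i')))
            (by
              intro i1 i2 h12
              apply hdj
              intro heq
              have h3 := E2.symm.injective heq
              exact h12 (congrArg Prod.snd h3))
            (fun i' => uB (E2.symm (d, i')))
            (fun i' => huB (E2.symm (d, i')))
          exact ⟨U, hU⟩
    obtain ⟨B, hdj, hsc⟩ := hQ (n + 1 - (k : ℕ)) (by omega)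
    have harr : ((k : ℕ) + (n + 1 - (k : ℕ)) : ℕ) = n + 1 := by omega
    refine final n L hL mu hR (fun a => B (E a)) ?_ ?_
    · intro a a' haa'
      exact hdj _ _ (fun h => haa' (E.injective h))
    · intro a
      obtain ⟨u, hu⟩ := scale_congr (by rw [harr]) (hsc (E a))
      refine ⟨Cardinal.aleph (((n + 1 : ℕ)) : Ordinal), u, aleph_nat_regular _, ?_, ?_, hu⟩
      · apply Cardinal.aleph_lt_aleph.mpr
        exact_mod_cast (by omega : n < n + 1)
      · have h2 : ((n + 1 : ℕ) : Ordinal) = (n : Ordinal) + 1 := by push_cast; ring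
        rw [h2]
        exact hmu

end Main
end Stmt14Aux


/-- Corollary 2.4: let `n ∈ ω` and `μ ≥ ℵ_{n+1}`. If a product of nonempty spaces
satisfies `R(ℵ_{n+1},μ;<ℵ_{n+1})` (here `L` is an index type of cardinality `ℵ_{n+1}`),
then at most `ℵ_n` of the factors fail to be initially `μ`-compact. -/
theorem stmt14 (n : ℕ) (L : Type u) (hL : #L = Cardinal.aleph (n + 1))
    (mu : Cardinal.{u}) (hmu : Cardinal.aleph (n + 1) ≤ mu)
    (J : Type u) (X : J → Type u) [∀ j, TopologicalSpace (X j)] [∀ j, Nonempty (X j)]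
    (hR : SatisfiesR (∀ j, X j) L mu (Cardinal.aleph (n + 1))) :
    #{j : J | ¬ InitiallyMuCompact (X j) mu} ≤ Cardinal.aleph n := by
  exact Stmt14Aux.main_theorem n L hL mu hmu hR
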